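/- For unit vectors x, x' ∈ R^d with ||x - x'||_2^2 ≤ 4r^2 (0 ≤ r ≤ 1/√2), the NTK feature distance satisfies K(x,x) + K(x',x') - 2K(x,x') ≤ 2r^2 + arccos(1 - 2r^2), where K(u,v) = u^T v (π - arccos(u^T v))/(2π). Equivalently, 1 - x^T x'(π - arccos(x^T x'))/π ≤ 2r^2 + arccos(1 - 2r^2). -/
import Mathlib


open Real
open scoped RealInnerProductSpace

theorem stmt8 {d : ℕ} (x x' : EuclideanSpace ℝ (Fin d)) (r : ℝ)
    (hx : ‖x‖ = 1) (hx' : ‖x'‖ = 1) (hr0 : 0 ≤ r) (hr : r ≤ 1 / Real.sqrt 2)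
    (hdist : ‖x - x'‖ ≤ 2 * r) :
    1 - ⟪x, x'⟫ * (π - arccos ⟪x, x'⟫) / π ≤ 2 * r ^ 2 + arccos (1 - 2 * r ^ 2) := by
  have hπ := Real.pi_pos
  have hπ3 := Real.pi_gt_three
  set t := ⟪x, x'⟫ with ht
  have ht1 : t ≤ 1 := by
    have := real_inner_le_norm x x'
    simpa [hx, hx'] using this
  have hr2 : r ^ 2 ≤ 1 / 2 := by
    have h2 : (0:ℝ) < Real.sqrt 2 := by positivity
    have := mul_le_mul hr hr hr0 (le_of_lt (by positivity))
    have hs : (1 / Real.sqrt 2) * (1 / Real.sqrt 2) = 1 / 2 := by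
      rw [div_mul_div_comm, one_mul, Real.mul_self_sqrt (by norm_num : (0:ℝ) ≤ 2)]
    nlinarith
  have hsq : ‖x - x'‖ ^ 2 ≤ (2 * r) ^ 2 := by
    apply pow_le_pow_left₀ (norm_nonneg _) hdist
  have hns : ‖x - x'‖ ^ 2 = 2 - 2 * t := by
    rw [norm_sub_sq_real, hx, hx']; ring
  have htlb : 1 - 2 * r ^ 2 ≤ t := by nlinarith
  have ht0 : 0 ≤ t := by nlinarith
  have harc : arccos t ≤ arccos (1 - 2 * r ^ 2) := by
    unfold Real.arccos
    have := Real.monotone_arcsin htlb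
    linarith
  have ha := Real.arccos_nonneg t
  have ha' := Real.arccos_nonneg (1 - 2 * r ^ 2)
  have key : 1 - t * (π - arccos t) / π = (1 - t) + t * arccos t / π := by
    field_simp
    ring
  rw [key]
  have h1 : 1 - t ≤ 2 * r ^ 2 := by linarith
  have h2 : t * arccos t / π ≤ arccos (1 - 2 * r ^ 2) := by
    rw [div_le_iff₀ hπ]
    nlinarith
  linarith
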